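/- No Pontryagin extremal of the anaerobic bioreactor problem has both switching functions vanishing identically on a nondegenerate interval. Precisely: let a < b, let u1, u2 : [a,b] → [0,1] be measurable, let x3, x4, x5, x6, x7 : [a,b] → ℝ be absolutely continuous and satisfy the state system a.e. on [a,b] with x3(t), x4(t), x5(t) ≥ 0 and x6(t), x7(t) > 0 for all t ∈ [a,b], and let λ1, …, λ7 : [a,b] → ℝ be absolutely continuous and satisfy the adjoint system a.e. on [a,b]. Assume a1·b2 − a2·b1 ≠ 0, (b1 − b2)·μ̄ + (a2 − a1)·v̄ ≠ 0, and λ1(t) ≡ λ2(t) ≡ c on [a,b] with c ≠ 0. Then it is impossible that both λ1(t) + F·λ3(t) = 0 for all t ∈ [a,b] and λ2(t) + F·λ4(t) = 0 for all t ∈ [a,b]. -/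

import Mathlib

open MeasureTheory Set

/-- Positive constants of the bioreactor uptake kinetics. -/
structure BioParams where
  vgmax : ℝ
  vzmax : ℝ
  kg : ℝ
  kieg : ℝ
  kz : ℝ
  kiez : ℝ
  kig : ℝ
  vgmax_pos : 0 < vgmax
  vzmax_pos : 0 < vzmax
  kg_pos : 0 < kg
  kieg_pos : 0 < kieg
  kz_pos : 0 < kz
  kiez_pos : 0 < kiez
  kig_pos : 0 < kig

/-- Glucose uptake rate `v_g(x3,x5,x7)`. -/
noncomputable def vg (P : BioParams) (x3 x5 x7 : ℝ) : ℝ :=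
  P.vgmax * x3 * x7 / ((P.kg * x7 + x3) * (x7 + x5 / P.kieg))

/-- Xylose uptake rate `v_z(x3,x4,x5,x7)`. -/
noncomputable def vz (P : BioParams) (x3 x4 x5 x7 : ℝ) : ℝ :=
  P.vzmax * x4 * x7 ^ 2 /
    ((P.kz * x7 + x4) * (x7 + x3 / P.kig) * (x7 + x5 / P.kiez))

/-- Coefficients of the affine growth rate and ethanol flux:
`μ = a1 v_g + a2 v_z + μ̄`, `v_e = b1 v_g + b2 v_z + v̄`. -/
structure AffineCoeffs where
  a1 : ℝ
  a2 : ℝ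
  b1 : ℝ
  b2 : ℝ
  mubar : ℝ
  vbar : ℝ
  a1_pos : 0 < a1
  a2_pos : 0 < a2
  b1_pos : 0 < b1
  b2_pos : 0 < b2
  mubar_pos : 0 < mubar

/-- Biomass growth rate `μ`. -/
noncomputable def mu (P : BioParams) (C : AffineCoeffs) (x3 x4 x5 x7 : ℝ) : ℝ :=
  C.a1 * vg P x3 x5 x7 + C.a2 * vz P x3 x4 x5 x7 + C.mubar

/-- Ethanol flux `v_e`. -/
noncomputable def ve (P : BioParams) (C : AffineCoeffs) (x3 x4 x5 x7 : ℝ) : ℝ :=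
  C.b1 * vg P x3 x5 x7 + C.b2 * vz P x3 x4 x5 x7 + C.vbar

/-- `∂v_g/∂x3`. -/
noncomputable def dvg_dx3 (P : BioParams) (x3 x5 x7 : ℝ) : ℝ :=
  deriv (fun y => vg P y x5 x7) x3

/-- `∂v_g/∂x5`. -/
noncomputable def dvg_dx5 (P : BioParams) (x3 x5 x7 : ℝ) : ℝ :=
  deriv (fun y => vg P x3 y x7) x5

/-- `∂v_g/∂x7`. -/
noncomputable def dvg_dx7 (P : BioParams) (x3 x5 x7 : ℝ) : ℝ :=
  deriv (fun y => vg P x3 x5 y) x7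

/-- `∂v_z/∂x3`. -/
noncomputable def dvz_dx3 (P : BioParams) (x3 x4 x5 x7 : ℝ) : ℝ :=
  deriv (fun y => vz P y x4 x5 x7) x3

/-- `∂v_z/∂x4`. -/
noncomputable def dvz_dx4 (P : BioParams) (x3 x4 x5 x7 : ℝ) : ℝ :=
  deriv (fun y => vz P x3 y x5 x7) x4

/-- `∂v_z/∂x5`. -/
noncomputable def dvz_dx5 (P : BioParams) (x3 x4 x5 x7 : ℝ) : ℝ :=
  deriv (fun y => vz P x3 x4 y x7) x5

/-- `∂v_z/∂x7`. -/
noncomputable def dvz_dx7 (P : BioParams) (x3 x4 x5 x7 : ℝ) : ℝ :=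
  deriv (fun y => vz P x3 x4 x5 y) x7

/-- `∂μ/∂x3`. -/
noncomputable def dmu_dx3 (P : BioParams) (C : AffineCoeffs) (x3 x4 x5 x7 : ℝ) : ℝ :=
  deriv (fun y => mu P C y x4 x5 x7) x3

/-- `∂μ/∂x4`. -/
noncomputable def dmu_dx4 (P : BioParams) (C : AffineCoeffs) (x3 x4 x5 x7 : ℝ) : ℝ :=
  deriv (fun y => mu P C x3 y x5 x7) x4

/-- `∂μ/∂x5`. -/
noncomputable def dmu_dx5 (P : BioParams) (C : AffineCoeffs) (x3 x4 x5 x7 : ℝ) : ℝ :=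
  deriv (fun y => mu P C x3 x4 y x7) x5

/-- `∂μ/∂x7`. -/
noncomputable def dmu_dx7 (P : BioParams) (C : AffineCoeffs) (x3 x4 x5 x7 : ℝ) : ℝ :=
  deriv (fun y => mu P C x3 x4 x5 y) x7

/-- `∂v_e/∂x3`. -/
noncomputable def dve_dx3 (P : BioParams) (C : AffineCoeffs) (x3 x4 x5 x7 : ℝ) : ℝ :=
  deriv (fun y => ve P C y x4 x5 x7) x3

/-- `∂v_e/∂x4`. -/
noncomputable def dve_dx4 (P : BioParams) (C : AffineCoeffs) (x3 x4 x5 x7 : ℝ) : ℝ :=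
  deriv (fun y => ve P C x3 y x5 x7) x4

/-- `∂v_e/∂x5`. -/
noncomputable def dve_dx5 (P : BioParams) (C : AffineCoeffs) (x3 x4 x5 x7 : ℝ) : ℝ :=
  deriv (fun y => ve P C x3 x4 y x7) x5

/-- `∂v_e/∂x7`. -/
noncomputable def dve_dx7 (P : BioParams) (C : AffineCoeffs) (x3 x4 x5 x7 : ℝ) : ℝ :=
  deriv (fun y => ve P C x3 x4 x5 y) x7

/-- `x` is absolutely continuous on `[a,b]` and satisfies `ẋ = f` a.e. there,
expressed in integral form. -/
def SolvesODE (x f : ℝ → ℝ) (a b : ℝ) : Prop :=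
  IntervalIntegrable f MeasureTheory.volume a b ∧
    ∀ t ∈ Set.Icc a b, x t = x a + ∫ s in a..t, f s


section Aux

/-- FTC helper: if a continuous function has vanishing primitive on `[a,b]`,
it vanishes on `(a,b)`. -/
lemma eq_zero_on_Ioo_of_integral_eq_zero {f : ℝ → ℝ} {a b : ℝ}
    (hcont : ContinuousOn f (Set.Icc a b))
    (hint : ∀ t ∈ Set.Icc a b, (∫ s in a..t, f s) = 0) :
    ∀ t ∈ Set.Ioo a b, f t = 0 := by
  intro t ht
  have hmem : Set.Icc a b ∈ nhds t := Icc_mem_nhds ht.1 ht.2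
  have hct : ContinuousAt f t := hcont.continuousAt hmem
  have hInt : IntervalIntegrable f volume a t :=
    (hcont.mono (Set.Icc_subset_Icc le_rfl ht.2.le)).intervalIntegrable_of_Icc ht.1.le
  have hmeas : StronglyMeasurableAtFilter f (nhds t) volume :=
    ⟨Set.Icc a b, hmem, hcont.aestronglyMeasurable measurableSet_Icc⟩
  have hD : HasDerivAt (fun u => ∫ s in a..u, f s) (f t) t :=
    intervalIntegral.integral_hasDerivAt_right hInt hmeas hct
  have hEq : (fun u => ∫ s in a..u, f s) =ᶠ[nhds t] fun _ => (0 : ℝ) := by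
    filter_upwards [hmem] with u hu using hint u hu
  have hD' : HasDerivAt (fun _ : ℝ => (0 : ℝ)) (f t) t := hD.congr_of_eventuallyEq hEq.symm
  exact hD'.unique (hasDerivAt_const t 0)

/-- Explicit value of `∂v_g/∂x3`. -/
noncomputable def DG (P : BioParams) (x3 x5 x7 : ℝ) : ℝ :=
  P.vgmax * P.kg * x7 ^ 2 / ((P.kg * x7 + x3) ^ 2 * (x7 + x5 / P.kieg))

/-- Explicit value of `∂v_z/∂x4`. -/
noncomputable def DW (P : BioParams) (x3 x4 x5 x7 : ℝ) : ℝ :=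
  P.vzmax * P.kz * x7 ^ 3 /
    ((P.kz * x7 + x4) ^ 2 * (x7 + x3 / P.kig) * (x7 + x5 / P.kiez))

/-- Explicit value of `∂v_z/∂x3`. -/
noncomputable def DZ (P : BioParams) (x3 x4 x5 x7 : ℝ) : ℝ :=
  -(P.vzmax * x4 * x7 ^ 2) /
    (P.kig * (P.kz * x7 + x4) * (x7 + x3 / P.kig) ^ 2 * (x7 + x5 / P.kiez))

lemma hasDerivAt_vg_x3 (P : BioParams) {x3 x5 x7 : ℝ} (h3 : 0 ≤ x3) (h5 : 0 ≤ x5)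
    (h7 : 0 < x7) :
    HasDerivAt (fun y => vg P y x5 x7) (DG P x3 x5 x7) x3 := by
  have hd1 : 0 < P.kg * x7 + x3 := add_pos_of_pos_of_nonneg (mul_pos P.kg_pos h7) h3
  have hd2 : 0 < x7 + x5 / P.kieg := add_pos_of_pos_of_nonneg h7 (div_nonneg h5 P.kieg_pos.le)
  have hn : HasDerivAt (fun y : ℝ => P.vgmax * y * x7) (P.vgmax * x7) x3 := by
    simpa using ((hasDerivAt_id x3).const_mul P.vgmax).mul_const x7
  have hd : HasDerivAt (fun y : ℝ => (P.kg * x7 + y) * (x7 + x5 / P.kieg))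
      (x7 + x5 / P.kieg) x3 := by
    simpa using ((hasDerivAt_id x3).const_add (P.kg * x7)).mul_const (x7 + x5 / P.kieg)
  have h := hn.div hd (by positivity)
  simp only [vg, DG]
  convert h using 1
  rotate_left 3
  field_simp
  ring
  all_goals rfl

lemma hasDerivAt_vz_x4 (P : BioParams) {x3 x4 x5 x7 : ℝ} (h3 : 0 ≤ x3) (h4 : 0 ≤ x4)
    (h5 : 0 ≤ x5) (h7 : 0 < x7) :
    HasDerivAt (fun y => vz P x3 y x5 x7) (DW P x3 x4 x5 x7) x4 := by
  have hd1 : 0 < P.kz * x7 + x4 := add_pos_of_pos_of_nonneg (mul_pos P.kz_pos h7) h4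
  have hd2 : 0 < x7 + x3 / P.kig := add_pos_of_pos_of_nonneg h7 (div_nonneg h3 P.kig_pos.le)
  have hd3 : 0 < x7 + x5 / P.kiez := add_pos_of_pos_of_nonneg h7 (div_nonneg h5 P.kiez_pos.le)
  have hn : HasDerivAt (fun y : ℝ => P.vzmax * y * x7 ^ 2) (P.vzmax * x7 ^ 2) x4 := by
    simpa using ((hasDerivAt_id x4).const_mul P.vzmax).mul_const (x7 ^ 2)
  have hd : HasDerivAt
      (fun y : ℝ => (P.kz * x7 + y) * (x7 + x3 / P.kig) * (x7 + x5 / P.kiez))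
      ((x7 + x3 / P.kig) * (x7 + x5 / P.kiez)) x4 := by
    simpa [mul_assoc] using
      (((hasDerivAt_id x4).const_add (P.kz * x7)).mul_const (x7 + x3 / P.kig)).mul_const
        (x7 + x5 / P.kiez)
  have h := hn.div hd (by positivity)
  simp only [vz, DW]
  convert h using 1
  rotate_left 3
  field_simp
  ring
  all_goals rfl

lemma hasDerivAt_vz_x3 (P : BioParams) {x3 x4 x5 x7 : ℝ} (h3 : 0 ≤ x3) (h4 : 0 ≤ x4)
    (h5 : 0 ≤ x5) (h7 : 0 < x7) :
    HasDerivAt (fun y => vz P y x4 x5 x7) (DZ P x3 x4 x5 x7) x3 := by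
  have hd1 : 0 < P.kz * x7 + x4 := add_pos_of_pos_of_nonneg (mul_pos P.kz_pos h7) h4
  have hd2 : 0 < x7 + x3 / P.kig := add_pos_of_pos_of_nonneg h7 (div_nonneg h3 P.kig_pos.le)
  have hd3 : 0 < x7 + x5 / P.kiez := add_pos_of_pos_of_nonneg h7 (div_nonneg h5 P.kiez_pos.le)
  have hn : HasDerivAt (fun _ : ℝ => P.vzmax * x4 * x7 ^ 2) 0 x3 := hasDerivAt_const _ _
  have hin : HasDerivAt (fun y : ℝ => x7 + y / P.kig) (1 / P.kig) x3 := by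
    simpa using ((hasDerivAt_id x3).div_const P.kig).const_add x7
  have hdd : HasDerivAt
      (fun y : ℝ => (P.kz * x7 + x4) * (x7 + y / P.kig) * (x7 + x5 / P.kiez))
      ((P.kz * x7 + x4) * (1 / P.kig) * (x7 + x5 / P.kiez)) x3 := by
    simpa [mul_assoc] using (hin.const_mul (P.kz * x7 + x4)).mul_const (x7 + x5 / P.kiez)
  have h := hn.div hdd (by positivity)
  simp only [vz, DZ]
  convert h using 1
  rotate_left 3
  have hk := P.kig_pos
  field_simp
  ring
  all_goals rfl

lemma dvg_dx3_eq (P : BioParams) {x3 x5 x7 : ℝ} (h3 : 0 ≤ x3) (h5 : 0 ≤ x5) (h7 : 0 < x7) :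
    dvg_dx3 P x3 x5 x7 = DG P x3 x5 x7 :=
  (hasDerivAt_vg_x3 P h3 h5 h7).deriv

lemma dvz_dx4_eq (P : BioParams) {x3 x4 x5 x7 : ℝ} (h3 : 0 ≤ x3) (h4 : 0 ≤ x4)
    (h5 : 0 ≤ x5) (h7 : 0 < x7) :
    dvz_dx4 P x3 x4 x5 x7 = DW P x3 x4 x5 x7 :=
  (hasDerivAt_vz_x4 P h3 h4 h5 h7).deriv

lemma dvz_dx3_eq (P : BioParams) {x3 x4 x5 x7 : ℝ} (h3 : 0 ≤ x3) (h4 : 0 ≤ x4)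
    (h5 : 0 ≤ x5) (h7 : 0 < x7) :
    dvz_dx3 P x3 x4 x5 x7 = DZ P x3 x4 x5 x7 :=
  (hasDerivAt_vz_x3 P h3 h4 h5 h7).deriv

lemma dmu_dx3_eq (P : BioParams) (C : AffineCoeffs) {x3 x4 x5 x7 : ℝ} (h3 : 0 ≤ x3)
    (h4 : 0 ≤ x4) (h5 : 0 ≤ x5) (h7 : 0 < x7) :
    dmu_dx3 P C x3 x4 x5 x7 = C.a1 * DG P x3 x5 x7 + C.a2 * DZ P x3 x4 x5 x7 := by
  have h : HasDerivAt (fun y => mu P C y x4 x5 x7)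
      (C.a1 * DG P x3 x5 x7 + C.a2 * DZ P x3 x4 x5 x7) x3 := by
    simp only [mu]
    exact (((hasDerivAt_vg_x3 P h3 h5 h7).const_mul C.a1).add
      ((hasDerivAt_vz_x3 P h3 h4 h5 h7).const_mul C.a2)).add_const C.mubar
  exact h.deriv

lemma dve_dx3_eq (P : BioParams) (C : AffineCoeffs) {x3 x4 x5 x7 : ℝ} (h3 : 0 ≤ x3)
    (h4 : 0 ≤ x4) (h5 : 0 ≤ x5) (h7 : 0 < x7) :
    dve_dx3 P C x3 x4 x5 x7 = C.b1 * DG P x3 x5 x7 + C.b2 * DZ P x3 x4 x5 x7 := by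
  have h : HasDerivAt (fun y => ve P C y x4 x5 x7)
      (C.b1 * DG P x3 x5 x7 + C.b2 * DZ P x3 x4 x5 x7) x3 := by
    simp only [ve]
    exact (((hasDerivAt_vg_x3 P h3 h5 h7).const_mul C.b1).add
      ((hasDerivAt_vz_x3 P h3 h4 h5 h7).const_mul C.b2)).add_const C.vbar
  exact h.deriv

lemma dmu_dx4_eq (P : BioParams) (C : AffineCoeffs) {x3 x4 x5 x7 : ℝ} (h3 : 0 ≤ x3)
    (h4 : 0 ≤ x4) (h5 : 0 ≤ x5) (h7 : 0 < x7) :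
    dmu_dx4 P C x3 x4 x5 x7 = C.a2 * DW P x3 x4 x5 x7 := by
  have h : HasDerivAt (fun y => mu P C x3 y x5 x7) (C.a2 * DW P x3 x4 x5 x7) x4 := by
    simp only [mu]
    exact (((hasDerivAt_vz_x4 P h3 h4 h5 h7).const_mul C.a2).const_add
      (C.a1 * vg P x3 x5 x7)).add_const C.mubar
  exact h.deriv

lemma dve_dx4_eq (P : BioParams) (C : AffineCoeffs) {x3 x4 x5 x7 : ℝ} (h3 : 0 ≤ x3)
    (h4 : 0 ≤ x4) (h5 : 0 ≤ x5) (h7 : 0 < x7) :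
    dve_dx4 P C x3 x4 x5 x7 = C.b2 * DW P x3 x4 x5 x7 := by
  have h : HasDerivAt (fun y => ve P C x3 y x5 x7) (C.b2 * DW P x3 x4 x5 x7) x4 := by
    simp only [ve]
    exact (((hasDerivAt_vz_x4 P h3 h4 h5 h7).const_mul C.b2).const_add
      (C.b1 * vg P x3 x5 x7)).add_const C.vbar
  exact h.deriv

end Aux

/-- no Pontryagin extremal of the anaerobic bioreactor problem has both
switching functions `φ1 = λ1 + F λ3` and `φ2 = λ2 + F λ4` vanishing identically on a
nondegenerate interval `[a,b]`, provided `a1 b2 - a2 b1 ≠ 0`,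
`(b1 - b2) μ̄ + (a2 - a1) v̄ ≠ 0` and `λ1 ≡ λ2 ≡ c ≠ 0`. -/
theorem stmt0 (P : BioParams) (C : AffineCoeffs) (F : ℝ) (hF : 0 < F)
    (a b : ℝ) (hab : a < b)
    -- measurable controls with values in `[0,1]`
    (u1 u2 : ℝ → ℝ) (hu1m : Measurable u1) (hu2m : Measurable u2)
    (hu1 : ∀ t ∈ Set.Icc a b, u1 t ∈ Set.Icc (0:ℝ) 1)
    (hu2 : ∀ t ∈ Set.Icc a b, u2 t ∈ Set.Icc (0:ℝ) 1)
    -- absolutely continuous state trajectory satisfying the state system a.e.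
    (x3 x4 x5 x6 x7 : ℝ → ℝ)
    (hx3 : SolvesODE x3
      (fun s => F * u1 s - vg P (x3 s) (x5 s) (x7 s) * x6 s) a b)
    (hx4 : SolvesODE x4
      (fun s => F * u2 s - vz P (x3 s) (x4 s) (x5 s) (x7 s) * x6 s) a b)
    (hx5 : SolvesODE x5
      (fun s => ve P C (x3 s) (x4 s) (x5 s) (x7 s) * x6 s) a b)
    (hx6 : SolvesODE x6
      (fun s => mu P C (x3 s) (x4 s) (x5 s) (x7 s) * x6 s) a b)
    (hx7 : SolvesODE x7 (fun _ => F) a b)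
    -- sign conditions on the states
    (h3 : ∀ t ∈ Set.Icc a b, 0 ≤ x3 t) (h4 : ∀ t ∈ Set.Icc a b, 0 ≤ x4 t)
    (h5 : ∀ t ∈ Set.Icc a b, 0 ≤ x5 t)
    (h6 : ∀ t ∈ Set.Icc a b, 0 < x6 t) (h7 : ∀ t ∈ Set.Icc a b, 0 < x7 t)
    -- absolutely continuous adjoint vector satisfying the adjoint system a.e.
    (l1 l2 l3 l4 l5 l6 l7 : ℝ → ℝ)
    (hl1 : SolvesODE l1 (fun _ => 0) a b) (hl2 : SolvesODE l2 (fun _ => 0) a b)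
    (hl3 : SolvesODE l3
      (fun s => x6 s * (dvg_dx3 P (x3 s) (x5 s) (x7 s) * l3 s +
          dvz_dx3 P (x3 s) (x4 s) (x5 s) (x7 s) * l4 s -
          dve_dx3 P C (x3 s) (x4 s) (x5 s) (x7 s) * l5 s -
          dmu_dx3 P C (x3 s) (x4 s) (x5 s) (x7 s) * l6 s)) a b)
    (hl4 : SolvesODE l4
      (fun s => x6 s * (dvz_dx4 P (x3 s) (x4 s) (x5 s) (x7 s) * l4 s -
          dve_dx4 P C (x3 s) (x4 s) (x5 s) (x7 s) * l5 s -
          dmu_dx4 P C (x3 s) (x4 s) (x5 s) (x7 s) * l6 s)) a b)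
    (hl5 : SolvesODE l5
      (fun s => x6 s * (dvg_dx5 P (x3 s) (x5 s) (x7 s) * l3 s +
          dvz_dx5 P (x3 s) (x4 s) (x5 s) (x7 s) * l4 s -
          dve_dx5 P C (x3 s) (x4 s) (x5 s) (x7 s) * l5 s -
          dmu_dx5 P C (x3 s) (x4 s) (x5 s) (x7 s) * l6 s)) a b)
    (hl6 : SolvesODE l6
      (fun s => vg P (x3 s) (x5 s) (x7 s) * l3 s +
          vz P (x3 s) (x4 s) (x5 s) (x7 s) * l4 s -
          ve P C (x3 s) (x4 s) (x5 s) (x7 s) * l5 s -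
          mu P C (x3 s) (x4 s) (x5 s) (x7 s) * l6 s) a b)
    (hl7 : SolvesODE l7
      (fun s => x6 s * (dvg_dx7 P (x3 s) (x5 s) (x7 s) * l3 s +
          dvz_dx7 P (x3 s) (x4 s) (x5 s) (x7 s) * l4 s -
          dve_dx7 P C (x3 s) (x4 s) (x5 s) (x7 s) * l5 s -
          dmu_dx7 P C (x3 s) (x4 s) (x5 s) (x7 s) * l6 s)) a b)
    -- structural assumptions
    (hdet : C.a1 * C.b2 - C.a2 * C.b1 ≠ 0)
    (hnd : (C.b1 - C.b2) * C.mubar + (C.a2 - C.a1) * C.vbar ≠ 0)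
    (c : ℝ) (hc : c ≠ 0)
    (hl1c : ∀ t ∈ Set.Icc a b, l1 t = c) (hl2c : ∀ t ∈ Set.Icc a b, l2 t = c) :
    ¬ ((∀ t ∈ Set.Icc a b, l1 t + F * l3 t = 0) ∧
        (∀ t ∈ Set.Icc a b, l2 t + F * l4 t = 0)) := by
  rintro ⟨H1, H2⟩
  set k : ℝ := -c / F with hk
  have hkne : k ≠ 0 := div_ne_zero (neg_ne_zero.mpr hc) hF.ne'
  have haI : a ∈ Set.Icc a b := Set.left_mem_Icc.mpr hab.le
  -- the two switching relations force λ3 ≡ λ4 ≡ k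
  have hl3k : ∀ t ∈ Set.Icc a b, l3 t = k := by
    intro t ht
    have h := H1 t ht
    rw [hl1c t ht] at h
    rw [hk, eq_div_iff hF.ne']
    linear_combination h
  have hl4k : ∀ t ∈ Set.Icc a b, l4 t = k := by
    intro t ht
    have h := H2 t ht
    rw [hl2c t ht] at h
    rw [hk, eq_div_iff hF.ne']
    linear_combination h
  -- continuity of solutions of the ODEs
  have cont_of : ∀ (x f : ℝ → ℝ), SolvesODE x f a b → ContinuousOn x (Set.Icc a b) := by
    intro x f hxf
    have h1 : ContinuousOn (fun t => x a + ∫ s in a..t, f s) (Set.uIcc a b) :=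
      continuousOn_const.add
        (intervalIntegral.continuousOn_primitive_interval' hxf.1 Set.left_mem_uIcc)
    rw [Set.uIcc_of_le hab.le] at h1
    exact ContinuousOn.congr h1 fun t ht => hxf.2 t ht
  have c3 := cont_of _ _ hx3
  have c4 := cont_of _ _ hx4
  have c5 := cont_of _ _ hx5
  have c6 := cont_of _ _ hx6
  have c7 := cont_of _ _ hx7
  have cl3 := cont_of _ _ hl3
  have cl4 := cont_of _ _ hl4
  have cl5 := cont_of _ _ hl5
  have cl6 := cont_of _ _ hl6
  -- pointwise positivity of the various denominators
  have hp1 : ∀ s ∈ Set.Icc a b, 0 < P.kg * x7 s + x3 s := fun s hs =>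
    add_pos_of_pos_of_nonneg (mul_pos P.kg_pos (h7 s hs)) (h3 s hs)
  have hp2 : ∀ s ∈ Set.Icc a b, 0 < x7 s + x5 s / P.kieg := fun s hs =>
    add_pos_of_pos_of_nonneg (h7 s hs) (div_nonneg (h5 s hs) P.kieg_pos.le)
  have hp3 : ∀ s ∈ Set.Icc a b, 0 < P.kz * x7 s + x4 s := fun s hs =>
    add_pos_of_pos_of_nonneg (mul_pos P.kz_pos (h7 s hs)) (h4 s hs)
  have hp4 : ∀ s ∈ Set.Icc a b, 0 < x7 s + x3 s / P.kig := fun s hs =>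
    add_pos_of_pos_of_nonneg (h7 s hs) (div_nonneg (h3 s hs) P.kig_pos.le)
  have hp5 : ∀ s ∈ Set.Icc a b, 0 < x7 s + x5 s / P.kiez := fun s hs =>
    add_pos_of_pos_of_nonneg (h7 s hs) (div_nonneg (h5 s hs) P.kiez_pos.le)
  have hDGpos : ∀ s ∈ Set.Icc a b, 0 < DG P (x3 s) (x5 s) (x7 s) := by
    intro s hs
    exact div_pos (mul_pos (mul_pos P.vgmax_pos P.kg_pos) (pow_pos (h7 s hs) 2))
      (mul_pos (pow_pos (hp1 s hs) 2) (hp2 s hs))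
  have hDWpos : ∀ s ∈ Set.Icc a b, 0 < DW P (x3 s) (x4 s) (x5 s) (x7 s) := by
    intro s hs
    exact div_pos (mul_pos (mul_pos P.vzmax_pos P.kz_pos) (pow_pos (h7 s hs) 3))
      (mul_pos (mul_pos (pow_pos (hp3 s hs) 2) (hp4 s hs)) (hp5 s hs))
  -- continuity of the explicit derivative expressions along the trajectory
  have hDGc : ContinuousOn (fun s => DG P (x3 s) (x5 s) (x7 s)) (Set.Icc a b) := by
    simp only [DG]
    exact ContinuousOn.div (by fun_prop) (by fun_prop) fun s hs =>
      (mul_pos (pow_pos (hp1 s hs) 2) (hp2 s hs)).ne'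
  have hDWc : ContinuousOn (fun s => DW P (x3 s) (x4 s) (x5 s) (x7 s)) (Set.Icc a b) := by
    simp only [DW]
    exact ContinuousOn.div (by fun_prop) (by fun_prop) fun s hs =>
      (mul_pos (mul_pos (pow_pos (hp3 s hs) 2) (hp4 s hs)) (hp5 s hs)).ne'
  have hDZc : ContinuousOn (fun s => DZ P (x3 s) (x4 s) (x5 s) (x7 s)) (Set.Icc a b) := by
    simp only [DZ]
    exact ContinuousOn.div (by fun_prop) (by fun_prop) fun s hs =>
      (mul_pos (mul_pos (mul_pos P.kig_pos (hp3 s hs)) (pow_pos (hp4 s hs) 2))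
        (hp5 s hs)).ne'
  -- canonical names for the adjoint integrands of λ3, λ4, λ6
  set f3r : ℝ → ℝ := fun s => x6 s * (dvg_dx3 P (x3 s) (x5 s) (x7 s) * l3 s +
      dvz_dx3 P (x3 s) (x4 s) (x5 s) (x7 s) * l4 s -
      dve_dx3 P C (x3 s) (x4 s) (x5 s) (x7 s) * l5 s -
      dmu_dx3 P C (x3 s) (x4 s) (x5 s) (x7 s) * l6 s) with hf3r
  set f4r : ℝ → ℝ := fun s => x6 s * (dvz_dx4 P (x3 s) (x4 s) (x5 s) (x7 s) * l4 s -
      dve_dx4 P C (x3 s) (x4 s) (x5 s) (x7 s) * l5 s -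
      dmu_dx4 P C (x3 s) (x4 s) (x5 s) (x7 s) * l6 s) with hf4r
  set f6r : ℝ → ℝ := fun s => vg P (x3 s) (x5 s) (x7 s) * l3 s +
      vz P (x3 s) (x4 s) (x5 s) (x7 s) * l4 s -
      ve P C (x3 s) (x4 s) (x5 s) (x7 s) * l5 s -
      mu P C (x3 s) (x4 s) (x5 s) (x7 s) * l6 s with hf6r
  -- step 1 : the λ4 adjoint equation forces b2 λ5 + a2 λ6 = k on (a,b)
  have hEq4 : ∀ s ∈ Set.Icc a b, f4r s =
      x6 s * DW P (x3 s) (x4 s) (x5 s) (x7 s) * (k - (C.b2 * l5 s + C.a2 * l6 s)) := by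
    intro s hs
    simp only [hf4r]
    rw [dvz_dx4_eq P (h3 s hs) (h4 s hs) (h5 s hs) (h7 s hs),
      dve_dx4_eq P C (h3 s hs) (h4 s hs) (h5 s hs) (h7 s hs),
      dmu_dx4_eq P C (h3 s hs) (h4 s hs) (h5 s hs) (h7 s hs), hl4k s hs]
    ring
  have hint4 : ∀ t ∈ Set.Icc a b,
      (∫ s in a..t,
        x6 s * DW P (x3 s) (x4 s) (x5 s) (x7 s) * (k - (C.b2 * l5 s + C.a2 * l6 s))) = 0 := by
    intro t ht
    have hsubset : Set.uIcc a t ⊆ Set.Icc a b := by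
      rw [Set.uIcc_of_le ht.1]
      exact Set.Icc_subset_Icc le_rfl ht.2
    have hcg : (∫ s in a..t,
        x6 s * DW P (x3 s) (x4 s) (x5 s) (x7 s) * (k - (C.b2 * l5 s + C.a2 * l6 s))) =
        ∫ s in a..t, f4r s :=
      intervalIntegral.integral_congr fun s hs => (hEq4 s (hsubset hs)).symm
    rw [hcg]
    have e1 : l4 t = l4 a + ∫ s in a..t, f4r s := hl4.2 t ht
    have e2 := hl4k t ht
    have e3 := hl4k a haI
    linarith
  have hcont4 : ContinuousOn
      (fun s => x6 s * DW P (x3 s) (x4 s) (x5 s) (x7 s) *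
        (k - (C.b2 * l5 s + C.a2 * l6 s))) (Set.Icc a b) :=
    (c6.mul hDWc).mul (continuousOn_const.sub
      ((continuousOn_const.mul cl5).add (continuousOn_const.mul cl6)))
  have hzero4 : ∀ t ∈ Set.Ioo a b, C.b2 * l5 t + C.a2 * l6 t = k := by
    intro t ht
    have h := eq_zero_on_Ioo_of_integral_eq_zero hcont4 hint4 t ht
    have htI : t ∈ Set.Icc a b := Set.Ioo_subset_Icc_self ht
    rcases mul_eq_zero.mp h with h' | h'
    · rcases mul_eq_zero.mp h' with h'' | h''
      · exact absurd h'' (h6 t htI).ne'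
      · exact absurd h'' (hDWpos t htI).ne'
    · linarith
  -- step 2 : the λ3 adjoint equation forces b1 λ5 + a1 λ6 = k on (a,b)
  have hEq3 : ∀ s ∈ Set.Icc a b, f3r s =
      x6 s * (DG P (x3 s) (x5 s) (x7 s) * (k - (C.b1 * l5 s + C.a1 * l6 s)) +
        DZ P (x3 s) (x4 s) (x5 s) (x7 s) * (k - (C.b2 * l5 s + C.a2 * l6 s))) := by
    intro s hs
    simp only [hf3r]
    rw [dvg_dx3_eq P (h3 s hs) (h5 s hs) (h7 s hs),
      dvz_dx3_eq P (h3 s hs) (h4 s hs) (h5 s hs) (h7 s hs),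
      dve_dx3_eq P C (h3 s hs) (h4 s hs) (h5 s hs) (h7 s hs),
      dmu_dx3_eq P C (h3 s hs) (h4 s hs) (h5 s hs) (h7 s hs), hl3k s hs, hl4k s hs]
    ring
  have hint3 : ∀ t ∈ Set.Icc a b,
      (∫ s in a..t,
        x6 s * (DG P (x3 s) (x5 s) (x7 s) * (k - (C.b1 * l5 s + C.a1 * l6 s)) +
          DZ P (x3 s) (x4 s) (x5 s) (x7 s) * (k - (C.b2 * l5 s + C.a2 * l6 s)))) = 0 := by
    intro t ht
    have hsubset : Set.uIcc a t ⊆ Set.Icc a b := by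
      rw [Set.uIcc_of_le ht.1]
      exact Set.Icc_subset_Icc le_rfl ht.2
    have hcg : (∫ s in a..t,
        x6 s * (DG P (x3 s) (x5 s) (x7 s) * (k - (C.b1 * l5 s + C.a1 * l6 s)) +
          DZ P (x3 s) (x4 s) (x5 s) (x7 s) * (k - (C.b2 * l5 s + C.a2 * l6 s)))) =
        ∫ s in a..t, f3r s :=
      intervalIntegral.integral_congr fun s hs => (hEq3 s (hsubset hs)).symm
    rw [hcg]
    have e1 : l3 t = l3 a + ∫ s in a..t, f3r s := hl3.2 t ht
    have e2 := hl3k t ht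
    have e3 := hl3k a haI
    linarith
  have hcont3 : ContinuousOn
      (fun s => x6 s * (DG P (x3 s) (x5 s) (x7 s) * (k - (C.b1 * l5 s + C.a1 * l6 s)) +
        DZ P (x3 s) (x4 s) (x5 s) (x7 s) * (k - (C.b2 * l5 s + C.a2 * l6 s))))
      (Set.Icc a b) :=
    c6.mul ((hDGc.mul (continuousOn_const.sub
      ((continuousOn_const.mul cl5).add (continuousOn_const.mul cl6)))).add
      (hDZc.mul (continuousOn_const.sub
      ((continuousOn_const.mul cl5).add (continuousOn_const.mul cl6)))))
  have hzero3 : ∀ t ∈ Set.Ioo a b, C.b1 * l5 t + C.a1 * l6 t = k := by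
    intro t ht
    have h := eq_zero_on_Ioo_of_integral_eq_zero hcont3 hint3 t ht
    have htI : t ∈ Set.Icc a b := Set.Ioo_subset_Icc_self ht
    rw [hzero4 t ht, sub_self, mul_zero, add_zero] at h
    rcases mul_eq_zero.mp h with h' | h'
    · exact absurd h' (h6 t htI).ne'
    · rcases mul_eq_zero.mp h' with h'' | h''
      · exact absurd h'' (hDGpos t htI).ne'
      · linarith
  -- step 3 : λ5 and λ6 are pinned down on (a,b)
  have hD : C.b1 * C.a2 - C.b2 * C.a1 ≠ 0 := fun h => hdet (by linarith)
  have hl5D : ∀ t ∈ Set.Ioo a b,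
      l5 t * (C.b1 * C.a2 - C.b2 * C.a1) = k * (C.a2 - C.a1) := by
    intro t ht
    linear_combination C.a2 * hzero3 t ht - C.a1 * hzero4 t ht
  have hl6D : ∀ t ∈ Set.Ioo a b,
      l6 t * (C.b1 * C.a2 - C.b2 * C.a1) = k * (C.b1 - C.b2) := by
    intro t ht
    linear_combination C.b1 * hzero4 t ht - C.b2 * hzero3 t ht
  -- step 4 : the λ6 adjoint equation on a shrunken interval yields the contradiction
  set a' : ℝ := a + (b - a) / 4 with ha'
  set b' : ℝ := b - (b - a) / 4 with hb'
  have haa' : a < a' := by rw [ha']; linarith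
  have ha'b' : a' < b' := by rw [ha', hb']; linarith
  have hb'b : b' < b := by rw [hb']; linarith
  have hIoo : Set.Icc a' b' ⊆ Set.Ioo a b := fun t ht =>
    ⟨lt_of_lt_of_le haa' ht.1, lt_of_le_of_lt ht.2 hb'b⟩
  have hIcc : Set.Icc a' b' ⊆ Set.Icc a b := fun t ht => Set.Ioo_subset_Icc_self (hIoo ht)
  have ha'mem : a' ∈ Set.Icc a' b' := Set.left_mem_Icc.mpr ha'b'.le
  have l6const : ∀ t ∈ Set.Icc a' b', l6 t = l6 a' := fun t ht =>
    mul_right_cancel₀ hD ((hl6D t (hIoo ht)).trans (hl6D a' (hIoo ha'mem)).symm)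
  have hint6 : ∀ t ∈ Set.Icc a' b', (∫ s in a'..t, f6r s) = 0 := by
    intro t ht
    have htI : t ∈ Set.Icc a b := hIcc ht
    have ha'I : a' ∈ Set.Icc a b := hIcc ha'mem
    have hi1 : IntervalIntegrable f6r volume a a' := hl6.1.mono_set (by
      rw [Set.uIcc_of_le hab.le, Set.uIcc_of_le haa'.le]
      exact Set.Icc_subset_Icc le_rfl ha'I.2)
    have hi2 : IntervalIntegrable f6r volume a' t := hl6.1.mono_set (by
      rw [Set.uIcc_of_le hab.le, Set.uIcc_of_le ht.1]
      exact Set.Icc_subset_Icc ha'I.1 htI.2)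
    have hadd := intervalIntegral.integral_add_adjacent_intervals hi1 hi2
    have e1 : l6 t = l6 a + ∫ s in a..t, f6r s := hl6.2 t htI
    have e2 : l6 a' = l6 a + ∫ s in a..a', f6r s := hl6.2 a' ha'I
    have e3 := l6const t ht
    linarith
  have hvgc : ContinuousOn (fun s => vg P (x3 s) (x5 s) (x7 s)) (Set.Icc a b) := by
    simp only [vg]
    exact ContinuousOn.div (by fun_prop) (by fun_prop) fun s hs =>
      (mul_pos (hp1 s hs) (hp2 s hs)).ne'
  have hvzc : ContinuousOn (fun s => vz P (x3 s) (x4 s) (x5 s) (x7 s)) (Set.Icc a b) := by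
    simp only [vz]
    exact ContinuousOn.div (by fun_prop) (by fun_prop) fun s hs =>
      (mul_pos (mul_pos (hp3 s hs) (hp4 s hs)) (hp5 s hs)).ne'
  have hvec : ContinuousOn (fun s => ve P C (x3 s) (x4 s) (x5 s) (x7 s)) (Set.Icc a b) := by
    simp only [ve]
    exact ((continuousOn_const.mul hvgc).add (continuousOn_const.mul hvzc)).add
      continuousOn_const
  have hmuc : ContinuousOn (fun s => mu P C (x3 s) (x4 s) (x5 s) (x7 s)) (Set.Icc a b) := by
    simp only [mu]
    exact ((continuousOn_const.mul hvgc).add (continuousOn_const.mul hvzc)).add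
      continuousOn_const
  have hcont6 : ContinuousOn f6r (Set.Icc a' b') := by
    have : ContinuousOn f6r (Set.Icc a b) := by
      simp only [hf6r]
      exact (((hvgc.mul cl3).add (hvzc.mul cl4)).sub (hvec.mul cl5)).sub (hmuc.mul cl6)
    exact this.mono hIcc
  -- evaluate everything at the midpoint m
  set m : ℝ := (a + b) / 2 with hm
  have hmIoo' : m ∈ Set.Ioo a' b' := by
    constructor
    · rw [ha', hm]; linarith
    · rw [hb', hm]; linarith
  have hmIoo : m ∈ Set.Ioo a b := hIoo (Set.Ioo_subset_Icc_self hmIoo')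
  have hmI : m ∈ Set.Icc a b := Set.Ioo_subset_Icc_self hmIoo
  have h0 := eq_zero_on_Ioo_of_integral_eq_zero hcont6 hint6 m hmIoo'
  simp only [hf6r] at h0
  rw [hl3k m hmI, hl4k m hmI] at h0
  simp only [ve, mu] at h0
  have hfin : C.vbar * l5 m + C.mubar * l6 m = 0 := by
    linear_combination -h0 - vg P (x3 m) (x5 m) (x7 m) * hzero3 m hmIoo -
      vz P (x3 m) (x4 m) (x5 m) (x7 m) * hzero4 m hmIoo
  have hk0 : k * ((C.b1 - C.b2) * C.mubar + (C.a2 - C.a1) * C.vbar) = 0 := by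
    linear_combination (C.b1 * C.a2 - C.b2 * C.a1) * hfin - C.vbar * hl5D m hmIoo -
      C.mubar * hl6D m hmIoo
  exact hnd ((mul_eq_zero.mp hk0).resolve_left hkne)
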